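/- Let a, b, c be integers with 0 < c < b < a. If there exists a complex number v with |v| = 1 such that v^a + v^b + v^c + 1 = 0, then there exists a root of unity w (i.e. a complex number w with w^m = 1 for some positive integer m) such that w^a + w^b + w^c + 1 = 0. Consequently, for K = {0, c, b, a} with gcd(a, b, c) = 1, the system A(K) has a nontrivial bounded complex solution if and only if it has a nontrivial periodic complex solution. -/

import Mathlib

open Complex Polynomial


lemma four_units (u1 u2 u3 u4 : ℂ) (h1 : ‖u1‖ = 1) (h2 : ‖u2‖ = 1)
    (h3 : ‖u3‖ = 1) (h4 : ‖u4‖ = 1)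
    (hsum : u1 + u2 + u3 + u4 = 0) :
    (u1 + u2) * (u1 + u3) * (u1 + u4) = 0 := by
  have n1 : u1 ≠ 0 := by intro h; simp [h] at h1
  have n2 : u2 ≠ 0 := by intro h; simp [h] at h2
  have n3 : u3 ≠ 0 := by intro h; simp [h] at h3
  have n4 : u4 ≠ 0 := by intro h; simp [h] at h4
  have c1 : (starRingEnd ℂ) u1 = u1⁻¹ := by
    rw [Complex.inv_def]; simp [Complex.normSq_eq_norm_sq, h1]
  have c2 : (starRingEnd ℂ) u2 = u2⁻¹ := by
    rw [Complex.inv_def]; simp [Complex.normSq_eq_norm_sq, h2]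
  have c3 : (starRingEnd ℂ) u3 = u3⁻¹ := by
    rw [Complex.inv_def]; simp [Complex.normSq_eq_norm_sq, h3]
  have c4 : (starRingEnd ℂ) u4 = u4⁻¹ := by
    rw [Complex.inv_def]; simp [Complex.normSq_eq_norm_sq, h4]
  have hconj : u1⁻¹ + u2⁻¹ + u3⁻¹ + u4⁻¹ = 0 := by
    have := congrArg (starRingEnd ℂ) hsum
    simpa [c1, c2, c3, c4] using this
  have htriple : u2*u3*u4 + u1*u3*u4 + u1*u2*u4 + u1*u2*u3 = 0 := by
    field_simp at hconj
    linear_combination hconj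
  linear_combination u1^2 * hsum + htriple


noncomputable def shiftT : Module.End ℂ (ℤ → ℂ) :=
  { toFun := fun x n => x (n + 1)
    map_add' := fun x y => rfl
    map_smul' := fun c x => rfl }

lemma shiftT_pow (k : ℕ) (x : ℤ → ℂ) (n : ℤ) : (shiftT ^ k) x n = x (n + k) := by
  induction k generalizing x n with
  | zero => simp [shiftT]
  | succ k ih =>
    rw [pow_succ]
    show (shiftT ^ k) (shiftT x) n = _
    rw [ih]
    show x (n + k + 1) = _
    push_cast; ring_nf

lemma aeval_shiftT_apply (P : ℂ[X]) (x : ℤ → ℂ) (n : ℤ) :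
    (Polynomial.aeval shiftT P) x n
      = ∑ i ∈ Finset.range (P.natDegree + 1), P.coeff i * x (n + i) := by
  rw [Polynomial.aeval_eq_sum_range]
  have : ((∑ i ∈ Finset.range (P.natDegree + 1), P.coeff i • shiftT ^ i) x)
      = ∑ i ∈ Finset.range (P.natDegree + 1), P.coeff i • ((shiftT ^ i) x) := by
    simp [LinearMap.sum_apply]
  rw [this]
  simp [shiftT_pow, Finset.sum_apply]

lemma aeval_bounded (P : ℂ[X]) (x : ℤ → ℂ) (M : ℝ) (hM : ∀ n, ‖x n‖ ≤ M) :
    ∀ n, ‖(Polynomial.aeval shiftT P) x n‖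
      ≤ ∑ i ∈ Finset.range (P.natDegree + 1), ‖P.coeff i‖ * M := by
  intro n
  rw [aeval_shiftT_apply]
  calc ‖∑ i ∈ Finset.range (P.natDegree + 1), P.coeff i * x (n + i)‖
      ≤ ∑ i ∈ Finset.range (P.natDegree + 1), ‖P.coeff i * x (n + i)‖ :=
        norm_sum_le _ _
    _ ≤ ∑ i ∈ Finset.range (P.natDegree + 1), ‖P.coeff i‖ * M := by
        refine Finset.sum_le_sum fun i _ => ?_
        rw [norm_mul]
        exact mul_le_mul_of_nonneg_left (hM _) (norm_nonneg _)

lemma geom_zero (y : ℤ → ℂ) (r : ℂ) (habs : ‖r‖ ≠ 1)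
    (hrec : ∀ n : ℤ, y (n + 1) = r * y n)
    (hb : ∃ M, ∀ n, ‖y n‖ ≤ M) : y = 0 := by
  rcases eq_or_ne r 0 with hr0 | hr0
  · funext n
    have := hrec (n - 1)
    simpa [hr0] using this
  · have hyn : ∀ n : ℤ, y n = r ^ n * y 0 := by
      intro n
      induction n using Int.induction_on with
      | zero => simp
      | succ k ih => rw [hrec k, ih, zpow_add_one₀ hr0]; ring
      | pred k ih =>
        have h := hrec (-(k : ℤ) - 1)
        rw [sub_add_cancel, ih] at h
        apply mul_left_cancel₀ hr0
        rw [← mul_assoc, mul_comm r (r ^ (-(k : ℤ) - 1)), ← zpow_add_one₀ hr0,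
          show (-(k : ℤ) - 1 + 1) = -(k : ℤ) by ring]
        exact h.symm
    rcases eq_or_ne (y 0) 0 with hy0 | hy0
    · funext n; simp [hyn n, hy0]
    · exfalso
      obtain ⟨M, hM⟩ := hb
      have habspos : 0 < ‖r‖ := by
        simpa using (norm_pos_iff.mpr hr0)
      have hy0pos : 0 < ‖y 0‖ := norm_pos_iff.mpr hy0
      have key : ∀ n : ℤ, ‖y n‖ = ‖r‖ ^ n * ‖y 0‖ := by
        intro n
        rw [hyn n, norm_mul, norm_zpow]
      rcases lt_or_gt_of_ne habs with hlt | hgt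
      · -- |r| < 1 : look at large negative n
        have h1 : 1 < (‖r‖)⁻¹ := (one_lt_inv₀ habspos).mpr hlt
        obtain ⟨k, hk⟩ := pow_unbounded_of_one_lt (M / ‖y 0‖) h1
        have : M < ‖y (-(k : ℤ))‖ := by
          rw [key, zpow_neg, zpow_natCast, ← inv_pow]
          calc M = M / ‖y 0‖ * ‖y 0‖ := by field_simp
            _ < (‖r‖)⁻¹ ^ k * ‖y 0‖ := by
                exact mul_lt_mul_of_pos_right hk hy0pos
        exact absurd (hM _) (not_le.mpr this)
      · obtain ⟨k, hk⟩ := pow_unbounded_of_one_lt (M / ‖y 0‖) hgt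
        have : M < ‖y (k : ℤ)‖ := by
          rw [key, zpow_natCast]
          calc M = M / ‖y 0‖ * ‖y 0‖ := by field_simp
            _ < ‖r‖ ^ k * ‖y 0‖ :=
                mul_lt_mul_of_pos_right hk hy0pos
        exact absurd (hM _) (not_le.mpr this)

lemma key_aux : ∀ (N : ℕ) (P : ℂ[X]), P.natDegree ≤ N → P ≠ 0 →
    (∀ r : ℂ, P.IsRoot r → ‖r‖ ≠ 1) →
    ∀ x : ℤ → ℂ, (∃ M, ∀ n, ‖x n‖ ≤ M) →
    (Polynomial.aeval shiftT P) x = 0 → x = 0 := by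
  intro N
  induction N with
  | zero =>
    intro P hdeg hP hroots x hx h0
    obtain ⟨cc, hcc⟩ := Polynomial.natDegree_eq_zero.mp (Nat.le_zero.mp hdeg)
    have hcc0 : cc ≠ 0 := by rintro rfl; simp at hcc; exact hP hcc.symm
    rw [← hcc, Polynomial.aeval_C] at h0
    have : cc • x = 0 := h0
    rcases smul_eq_zero.mp this with h | h
    · exact absurd h hcc0
    · exact h
  | succ N ih =>
    intro P hdeg hP hroots x hx h0
    rcases Nat.eq_zero_or_pos P.natDegree with hd0 | hdpos
    · obtain ⟨cc, hcc⟩ := Polynomial.natDegree_eq_zero.mp hd0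
      have hcc0 : cc ≠ 0 := by rintro rfl; simp at hcc; exact hP hcc.symm
      rw [← hcc, Polynomial.aeval_C] at h0
      have : cc • x = 0 := h0
      rcases smul_eq_zero.mp this with h | h
      · exact absurd h hcc0
      · exact h
    · obtain ⟨r, hr⟩ := Complex.exists_root (Polynomial.natDegree_pos_iff_degree_pos.mp hdpos)
      obtain ⟨Q, hPQ⟩ := Polynomial.dvd_iff_isRoot.mpr hr
      have hQ0 : Q ≠ 0 := by rintro rfl; rw [mul_zero] at hPQ; exact hP hPQ
      have hX0 : (X - Polynomial.C r : ℂ[X]) ≠ 0 := Polynomial.X_sub_C_ne_zero r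
      have hdQ : Q.natDegree ≤ N := by
        have h1 : P.natDegree = 1 + Q.natDegree := by
          rw [hPQ, Polynomial.natDegree_mul hX0 hQ0, Polynomial.natDegree_X_sub_C]
        omega
      set y := (Polynomial.aeval shiftT Q) x with hy
      have hyb : ∃ M, ∀ n, ‖y n‖ ≤ M := by
        obtain ⟨M, hM⟩ := hx
        exact ⟨_, aeval_bounded Q x M hM⟩
      have hy0 : ∀ n : ℤ, y (n + 1) = r * y n := by
        intro n
        have := congrFun h0 n
        rw [hPQ, map_mul, Module.End.mul_apply] at this
        have h2 : (Polynomial.aeval shiftT (X - Polynomial.C r)) y n = 0 := this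
        rw [map_sub, Polynomial.aeval_X, Polynomial.aeval_C, LinearMap.sub_apply] at h2
        have h3 : shiftT y n - r • y n = 0 := by
          simpa [Module.algebraMap_end_apply] using h2
        have h4 : y (n + 1) - r * y n = 0 := h3
        linear_combination h4
      have hyz : y = 0 := geom_zero y r (hroots r hr) hy0 hyb
      exact ih Q hdQ hQ0
        (fun s hs => hroots s (by rw [hPQ]; simp [Polynomial.IsRoot] at hs ⊢; simp [hs]))
        x hx hyz

section helpers

lemma sum_expand (a b c : ℕ) (hc : 0 < c) (hcb : c < b) (hba : b < a)
    (x : ℤ → ℂ) (n : ℤ) :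
    ∑ s ∈ ({0, c, b, a} : Finset ℕ), x (n + (s : ℤ))
      = x n + x (n + c) + x (n + b) + x (n + a) := by
  have h0 : (0 : ℕ) ∉ ({c, b, a} : Finset ℕ) := by simp; omega
  have h1 : c ∉ ({b, a} : Finset ℕ) := by simp; omega
  have h2 : b ∉ ({a} : Finset ℕ) := by simp; omega
  rw [Finset.sum_insert h0, Finset.sum_insert h1, Finset.sum_insert h2,
    Finset.sum_singleton]
  push_cast
  ring_nf

lemma part1 (a b c : ℕ) (hc : 0 < c) (hcb : c < b) (hba : b < a)
    (v : ℂ) (hv1 : ‖v‖ = 1) (hveq : v ^ a + v ^ b + v ^ c + 1 = 0) :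
    ∃ w : ℂ, (∃ m : ℕ, 0 < m ∧ w ^ m = 1) ∧ w ^ a + w ^ b + w ^ c + 1 = 0 := by
  have habs : ∀ k : ℕ, ‖v ^ k‖ = 1 := fun k => by
    rw [norm_pow, hv1, one_pow]
  have hzero := four_units 1 (v ^ a) (v ^ b) (v ^ c) (by simp) (habs a) (habs b) (habs c)
    (by linear_combination hveq)
  have hv2 : ∀ k : ℕ, (1 : ℂ) + v ^ k = 0 → v ^ (2 * k) = 1 := by
    intro k hk
    have : v ^ k = -1 := by linear_combination hk
    rw [mul_comm, pow_mul, this]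
    norm_num
  rcases mul_eq_zero.mp hzero with h | h
  · rcases mul_eq_zero.mp h with h' | h'
    · exact ⟨v, ⟨2 * a, by omega, hv2 a h'⟩, hveq⟩
    · exact ⟨v, ⟨2 * b, by omega, hv2 b h'⟩, hveq⟩
  · exact ⟨v, ⟨2 * c, by omega, hv2 c h⟩, hveq⟩

end helpers

theorem stmt_9 (a b c : ℕ) (hc : 0 < c) (hcb : c < b) (hba : b < a) :
    ((∃ v : ℂ, ‖v‖ = 1 ∧ v ^ a + v ^ b + v ^ c + 1 = 0) →
      ∃ w : ℂ, (∃ m : ℕ, 0 < m ∧ w ^ m = 1) ∧ w ^ a + w ^ b + w ^ c + 1 = 0) ∧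
    (Nat.gcd a (Nat.gcd b c) = 1 →
      ((∃ x : ℤ → ℂ, x ≠ 0 ∧ (∃ M : ℝ, ∀ n : ℤ, ‖x n‖ ≤ M) ∧
          ∀ n : ℤ, ∑ s ∈ ({0, c, b, a} : Finset ℕ), x (n + (s : ℤ)) = 0) ↔
        (∃ x : ℤ → ℂ, x ≠ 0 ∧ (∃ p : ℤ, 1 ≤ p ∧ ∀ n : ℤ, x (n + p) = x n) ∧
          ∀ n : ℤ, ∑ s ∈ ({0, c, b, a} : Finset ℕ), x (n + (s : ℤ)) = 0))) := by
  constructor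
  · rintro ⟨v, hv1, hveq⟩
    exact part1 a b c hc hcb hba v hv1 hveq
  · intro _
    constructor
    · -- bounded → periodic
      rintro ⟨x, hx0, hxb, hxeq⟩
      set P : ℂ[X] := X ^ a + X ^ b + X ^ c + 1 with hPdef
      have hPne : P ≠ 0 := by
        intro h
        have : P.eval 0 = 0 := by rw [h]; simp
        rw [hPdef] at this
        simp [zero_pow hc.ne', zero_pow (show b ≠ 0 by omega),
          zero_pow (show a ≠ 0 by omega)] at this
      have hPeval : ∀ v : ℂ, P.eval v = v ^ a + v ^ b + v ^ c + 1 := by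
        intro v; simp [hPdef]
      have haeval : ∀ n : ℤ, (Polynomial.aeval shiftT P) x n
          = x (n + a) + x (n + b) + x (n + c) + x n := by
        intro n
        rw [hPdef]
        simp only [map_add, map_pow, Polynomial.aeval_X, map_one,
          LinearMap.add_apply, Module.End.one_apply, Pi.add_apply]
        rw [shiftT_pow, shiftT_pow, shiftT_pow]
      have hroot : ∃ v : ℂ, ‖v‖ = 1 ∧ v ^ a + v ^ b + v ^ c + 1 = 0 := by
        by_contra hno
        push_neg at hno
        apply hx0
        refine key_aux P.natDegree P le_rfl hPne ?_ x hxb ?_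
        · intro r hr h1
          exact hno r h1 (by rw [← hPeval r]; exact hr)
        · funext n
          rw [haeval n]
          have := hxeq n
          rw [sum_expand a b c hc hcb hba x n] at this
          show x (n + a) + x (n + b) + x (n + c) + x n = 0
          linear_combination this
      obtain ⟨v, hv1, hveq⟩ := hroot
      obtain ⟨w, ⟨m, hm, hwm⟩, hweq⟩ := part1 a b c hc hcb hba v hv1 hveq
      have hw0 : w ≠ 0 := by
        rintro rfl
        rw [zero_pow hm.ne'] at hwm
        exact zero_ne_one hwm
      refine ⟨fun n => w ^ n, ?_, ⟨(m : ℤ), by exact_mod_cast hm, ?_⟩, ?_⟩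
      · intro h
        have := congrFun h 0
        simp at this
      · intro n
        show w ^ (n + (m : ℤ)) = w ^ n
        rw [zpow_add₀ hw0, zpow_natCast, hwm, mul_one]
      · intro n
        rw [sum_expand a b c hc hcb hba]
        show w ^ n + w ^ (n + (c : ℤ)) + w ^ (n + (b : ℤ)) + w ^ (n + (a : ℤ)) = 0
        have e : ∀ k : ℕ, w ^ (n + (k : ℤ)) = w ^ n * w ^ k := fun k => by
          rw [zpow_add₀ hw0, zpow_natCast]
        rw [e c, e b, e a]
        linear_combination (w ^ n : ℂ) * hweq
    · -- periodic → bounded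
      rintro ⟨x, hx0, ⟨p, hp1, hper⟩, hxeq⟩
      refine ⟨x, hx0, ?_, hxeq⟩
      have hk : ∀ k n : ℤ, x (n + k * p) = x n := by
        intro k
        induction k using Int.induction_on with
        | zero => intro n; simp
        | succ k ih =>
          intro n
          rw [show n + ((k : ℤ) + 1) * p = n + p + (k : ℤ) * p by ring, ih, hper]
        | pred k ih =>
          intro n
          have h := hper (n + (-(k : ℤ) - 1) * p)
          rw [show n + (-(k : ℤ) - 1) * p + p = n + (-(k : ℤ)) * p by ring, ih n] at h
          exact h.symm
      have hp0 : 0 < p := by omega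
      have hmod : ∀ n : ℤ, x n = x (n % p) := by
        intro n
        conv_lhs => rw [← Int.emod_add_mul_ediv n p]
        rw [show n % p + p * (n / p) = n % p + (n / p) * p by ring]
        exact hk (n / p) (n % p)
      have hne : (Finset.Icc (0 : ℤ) (p - 1)).Nonempty := by
        refine ⟨0, Finset.mem_Icc.mpr ⟨le_refl _, by omega⟩⟩
      refine ⟨(Finset.Icc (0 : ℤ) (p - 1)).sup' hne (fun k => ‖x k‖),
        fun n => ?_⟩
      rw [hmod n]
      refine Finset.le_sup' (fun k => ‖x k‖)
        (Finset.mem_Icc.mpr ⟨Int.emod_nonneg n hp0.ne', ?_⟩)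
      have := Int.emod_lt_of_pos n hp0
      omega
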